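/- Generating function for second elementary symmetric function of Jucys–Murphy elements: in the center of the group algebra of S_n, e_2(J_1,…,J_n) = Σ_{μ : |μ|−ℓ(μ)=2} C_μ, i.e. e_2(J_1,…,J_n) equals the sum of the conjugacy class sums of all 3-cycles and of all products of two disjoint transpositions. -/

import Mathlib

/-- The Jucys–Murphy element `J_i = Σ_{j<i} (j i)` in the group algebra `ℂ[S_n]`. -/
noncomputable def JM (n : ℕ) (i : Fin n) : MonoidAlgebra ℂ (Equiv.Perm (Fin n)) :=
  ∑ j ∈ Finset.univ.filter (fun j : Fin n => j < i),
    MonoidAlgebra.single (Equiv.swap j i) (1 : ℂ)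

namespace JMAux

open Finset Equiv Equiv.Perm

lemma classify {n : ℕ} (σ : Perm (Fin n))
    (h : σ.cycleType.sum - Multiset.card σ.cycleType = 2) :
    σ.cycleType = {3} ∨ σ.cycleType = {2, 2} := by
  have h2 : ∀ x ∈ σ.cycleType, 2 ≤ x := fun x hx => two_le_of_mem_cycleType hx
  have hle : Multiset.card σ.cycleType • 2 ≤ σ.cycleType.sum :=
    Multiset.card_nsmul_le_sum h2
  rw [smul_eq_mul] at hle
  have hcard2 : Multiset.card σ.cycleType ≤ 2 := by omega
  interval_cases hc : (Multiset.card σ.cycleType)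
  · rw [Multiset.card_eq_zero] at hc
    simp [hc] at h
  · left
    obtain ⟨k, hk⟩ := Multiset.card_eq_one.mp hc
    rw [hk] at h ⊢
    simp at h
    rw [h]
  · right
    obtain ⟨k, l, hk⟩ := Multiset.card_eq_two.mp hc
    have hk2 : 2 ≤ k := h2 k (by rw [hk]; simp)
    have hl2 : 2 ≤ l := h2 l (by rw [hk]; simp)
    rw [hk] at h ⊢
    simp [Multiset.insert_eq_cons] at h
    have : k = 2 ∧ l = 2 := by omega
    rw [this.1, this.2]

lemma swap_cycleType {n : ℕ} {x y : Fin n} (h : x ≠ y) :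
    (swap x y).cycleType = {2} := by
  have hc : IsCycle (swap x y) := isCycle_swap h
  rw [hc.cycleType, support_swap h]
  simp [card_insert_of_notMem, h]

lemma cond_of_swaps {n : ℕ} {a i c j : Fin n} (hai : a < i) (hcj : c < j) (hij : i < j) :
    (swap a i * swap c j).cycleType.sum -
      Multiset.card (swap a i * swap c j).cycleType = 2 := by
  have haj : a ≠ j := (hai.trans hij).ne
  have hijne : i ≠ j := hij.ne
  have hcjne : c ≠ j := hcj.ne
  by_cases hca : c = a
  · subst hca
    have h3 : IsThreeCycle (swap c i * swap c j) :=
      isThreeCycle_swap_mul_swap_same hai.ne hcjne hijne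
    rw [h3.cycleType]; rfl
  · by_cases hci : c = i
    · subst hci
      rw [swap_comm a c]
      have h3 : IsThreeCycle (swap c a * swap c j) :=
        isThreeCycle_swap_mul_swap_same hai.ne' hcjne haj
      rw [h3.cycleType]; rfl
    · have hd : Perm.Disjoint (swap a i) (swap c j) := by
        intro x
        by_cases hx : x = a ∨ x = i
        · right
          rcases hx with rfl | rfl
          · exact swap_apply_of_ne_of_ne (Ne.symm hca) haj
          · exact swap_apply_of_ne_of_ne (Ne.symm hci) hijne
        · left
          push_neg at hx
          exact swap_apply_of_ne_of_ne hx.1 hx.2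
      rw [Perm.Disjoint.cycleType_mul hd, swap_cycleType hai.ne, swap_cycleType hcj.ne]
      rfl

lemma key {n : ℕ} (σ : Perm (Fin n))
    (hσ : σ.cycleType.sum - Multiset.card σ.cycleType = 2)
    (h1 : σ.support.Nonempty) :
    (σ * swap (σ⁻¹ (σ.support.max' h1)) (σ.support.max' h1)).support.card = 2 ∧
    (σ * swap (σ⁻¹ (σ.support.max' h1)) (σ.support.max' h1)).support ⊆
      σ.support.erase (σ.support.max' h1) ∧
    σ⁻¹ (σ.support.max' h1) < σ.support.max' h1 := by
  set j := σ.support.max' h1 with hjdef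
  set c := σ⁻¹ j with hcdef
  set s := σ * swap c j with hsdef
  have hjmem : j ∈ σ.support := σ.support.max'_mem h1
  have hσj : σ j ≠ j := mem_support.mp hjmem
  have hσc : σ c = j := σ.apply_symm_apply j
  have hcj : c ≠ j := fun e => hσj (by rw [e] at hσc; exact hσc)
  have hcmem : c ∈ σ.support := mem_support.mpr (by rw [hσc]; exact Ne.symm hcj)
  have hsj : s j = j := by
    simp only [hsdef, Perm.mul_apply, swap_apply_right, hσc]
  have hsub : s.support ⊆ σ.support.erase j := by
    intro x hx
    rw [mem_support] at hx
    rw [Finset.mem_erase]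
    constructor
    · rintro rfl; exact hx hsj
    · rw [mem_support]
      intro hfix
      apply hx
      have hxc : x ≠ c := fun e => (mem_support.mp hcmem) (e ▸ hfix)
      have hxj : x ≠ j := fun e => hσj (e ▸ hfix)
      simp only [hsdef, Perm.mul_apply, swap_apply_of_ne_of_ne hxc hxj, hfix]
  have hsne : s ≠ 1 := by
    intro e
    have : σ = swap c j := by
      rw [← swap_inv c j]
      exact mul_eq_one_iff_eq_inv.mp e
    have h2 : σ.cycleType.sum = 2 := by
      rw [sum_cycleType, this, support_swap hcj]
      simp [hcj]
    rcases classify σ hσ with h3 | h3 <;> rw [h3] at h2 <;>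
      simp [Multiset.insert_eq_cons] at h2
  have hcard : σ.cycleType.sum = σ.support.card := σ.sum_cycleType
  have hle2 : s.support.card ≤ 2 := by
    rcases classify σ hσ with h3 | h4
    · have : σ.support.card = 3 := by rw [← hcard, h3]; rfl
      calc s.support.card ≤ (σ.support.erase j).card := Finset.card_le_card hsub
        _ = 2 := by rw [Finset.card_erase_of_mem hjmem, this]
    · have hc4 : σ.support.card = 4 := by rw [← hcard, h4]; rfl
      have hord : σ * σ = 1 := by
        have : orderOf σ = 2 := by
          rw [← lcm_cycleType, h4]
          decide
        rw [← pow_two, ← this, pow_orderOf_eq_one]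
      have h2step : σ (σ j) = j := by
        have := congrArg (fun τ : Perm (Fin n) => τ j) hord
        simpa using this
      have hσσ : σ j = c := σ.injective (by rw [h2step, hσc])
      have hsc : s c = c := by
        simp only [hsdef, Perm.mul_apply, swap_apply_left, hσσ]
      have hsub2 : s.support ⊆ (σ.support.erase j).erase c := by
        intro x hx
        rw [Finset.mem_erase]
        refine ⟨?_, hsub hx⟩
        rintro rfl
        exact (mem_support.mp hx) hsc
      calc s.support.card ≤ ((σ.support.erase j).erase c).card := Finset.card_le_card hsub2
        _ = 2 := by
          rw [Finset.card_erase_of_mem, Finset.card_erase_of_mem hjmem, hc4]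
          exact Finset.mem_erase.mpr ⟨hcj, hcmem⟩
  have hne0 : s.support.card ≠ 0 := by
    simp only [ne_eq, Finset.card_eq_zero, support_eq_empty_iff]
    exact hsne
  have hne1 : s.support.card ≠ 1 := card_support_ne_one s
  have hcard2 : s.support.card = 2 := by omega
  refine ⟨hcard2, hsub, ?_⟩
  exact lt_of_le_of_ne (σ.support.le_max' c hcmem) hcj

lemma swap_of_isSwap {n : ℕ} {s : Perm (Fin n)} (hs : IsSwap s) {i : Fin n}
    (hi : i ∈ s.support) : swap (s i) i = s := by
  obtain ⟨x, y, hxy, rfl⟩ := hs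
  rw [support_swap hxy] at hi
  simp only [Finset.mem_insert, Finset.mem_singleton] at hi
  rcases hi with rfl | rfl
  · rw [swap_apply_left, swap_comm]
  · rw [swap_apply_right]

lemma support_nonempty_of_cond {n : ℕ} (σ : Perm (Fin n))
    (hσ : σ.cycleType.sum - Multiset.card σ.cycleType = 2) :
    σ.support.Nonempty := by
  rw [Finset.nonempty_iff_ne_empty, ne_eq, support_eq_empty_iff]
  rintro rfl
  simp [cycleType_one] at hσ

lemma s_support_nonempty {n : ℕ} (σ : Perm (Fin n))
    (hσ : σ.cycleType.sum - Multiset.card σ.cycleType = 2)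
    (h1 : σ.support.Nonempty) :
    (σ * swap (σ⁻¹ (σ.support.max' h1)) (σ.support.max' h1)).support.Nonempty := by
  rw [← Finset.card_pos, (key σ hσ h1).1]
  norm_num

/-- Decomposition of a permutation which is a product of two transpositions
into the canonical quadruple. -/
noncomputable def dec {n : ℕ} (σ : Perm (Fin n)) (h1 : σ.support.Nonempty)
    (h2 : (σ * swap (σ⁻¹ (σ.support.max' h1)) (σ.support.max' h1)).support.Nonempty) :
    (Fin n × Fin n) × (Fin n × Fin n) :=
  (((σ * swap (σ⁻¹ (σ.support.max' h1)) (σ.support.max' h1))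
      ((σ * swap (σ⁻¹ (σ.support.max' h1)) (σ.support.max' h1)).support.max' h2),
    (σ * swap (σ⁻¹ (σ.support.max' h1)) (σ.support.max' h1)).support.max' h2),
   (σ⁻¹ (σ.support.max' h1), σ.support.max' h1))

lemma dec_spec {n : ℕ} (σ : Perm (Fin n))
    (hσ : σ.cycleType.sum - Multiset.card σ.cycleType = 2)
    (h1 : σ.support.Nonempty)
    (h2 : (σ * swap (σ⁻¹ (σ.support.max' h1)) (σ.support.max' h1)).support.Nonempty) :
    (dec σ h1 h2).1.1 < (dec σ h1 h2).1.2 ∧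
    (dec σ h1 h2).2.1 < (dec σ h1 h2).2.2 ∧
    (dec σ h1 h2).1.2 < (dec σ h1 h2).2.2 ∧
    swap (dec σ h1 h2).1.1 (dec σ h1 h2).1.2 *
      swap (dec σ h1 h2).2.1 (dec σ h1 h2).2.2 = σ := by
  obtain ⟨hcard2, hsub, hcj⟩ := key σ hσ h1
  set j := σ.support.max' h1 with hjdef
  set c := σ⁻¹ j with hcdef
  set s := σ * swap c j with hsdef
  set i := s.support.max' h2 with hidef
  have hswap : IsSwap s := card_support_eq_two.mp hcard2
  have himem : i ∈ s.support := s.support.max'_mem h2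
  have hsi : s i ≠ i := mem_support.mp himem
  have hss : s * s = 1 := by
    obtain ⟨x, y, hxy, hs⟩ := hswap
    rw [hs, swap_mul_self]
  have hsii : s (s i) = i := by
    have := congrArg (fun τ : Perm (Fin n) => τ i) hss
    simpa using this
  have hamem : s i ∈ s.support := mem_support.mpr (by rw [hsii]; exact Ne.symm hsi)
  have hai : s i < i := lt_of_le_of_ne (s.support.le_max' _ hamem) hsi
  have hij : i < j := by
    have := hsub himem
    rw [Finset.mem_erase] at this
    exact lt_of_le_of_ne (σ.support.le_max' i this.2) this.1
  refine ⟨hai, hcj, hij, ?_⟩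
  show swap (s i) i * swap c j = σ
  rw [swap_of_isSwap hswap himem, hsdef, mul_assoc, swap_mul_self, mul_one]

lemma dec_of_swaps {n : ℕ} {a i c j : Fin n} (hai : a < i) (hcj : c < j) (hij : i < j)
    (h1 : (swap a i * swap c j).support.Nonempty)
    (h2 : ((swap a i * swap c j) *
        swap ((swap a i * swap c j)⁻¹ ((swap a i * swap c j).support.max' h1))
          ((swap a i * swap c j).support.max' h1)).support.Nonempty) :
    dec (swap a i * swap c j) h1 h2 = ((a, i), (c, j)) := by
  set σ := swap a i * swap c j with hσdef
  have haj : a ≠ j := (hai.trans hij).ne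
  have hijne : i ≠ j := hij.ne
  have hcjne : c ≠ j := hcj.ne
  have hsupσ : σ.support ⊆ {a, i, c, j} := by
    intro x hx
    have := support_mul_le (swap a i) (swap c j) hx
    rw [Finset.sup_eq_union, support_swap hai.ne, support_swap hcj.ne] at this
    simp only [Finset.mem_union, Finset.mem_insert, Finset.mem_singleton] at this
    simp only [Finset.mem_insert, Finset.mem_singleton]
    tauto
  have hσj : σ j = swap a i c := by
    simp only [hσdef, Perm.mul_apply, swap_apply_right]
  have hσjlt : σ j < j := by
    rw [hσj]
    by_cases hca : c = a
    · subst hca; rw [swap_apply_left]; exact hij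
    · by_cases hci : c = i
      · subst hci; rw [swap_apply_right]; exact hai.trans hij
      · rw [swap_apply_of_ne_of_ne hca hci]; exact hcj
  have hjmem : j ∈ σ.support := mem_support.mpr hσjlt.ne
  have hmaxj : σ.support.max' h1 = j := by
    refine le_antisymm (Finset.max'_le _ _ _ fun y hy => ?_) (Finset.le_max' _ _ hjmem)
    have := hsupσ hy
    simp only [Finset.mem_insert, Finset.mem_singleton] at this
    rcases this with rfl | rfl | rfl | rfl
    · exact ((hai.trans hij).le)
    · exact hij.le
    · exact hcj.le
    · exact le_refl _
  have hinvj : σ⁻¹ j = c := by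
    rw [hσdef, mul_inv_rev, swap_inv, swap_inv, Perm.mul_apply,
      swap_apply_of_ne_of_ne (Ne.symm haj) (Ne.symm hijne), swap_apply_right]
  have hs : σ * swap (σ⁻¹ (σ.support.max' h1)) (σ.support.max' h1) = swap a i := by
    rw [hmaxj, hinvj, hσdef, mul_assoc, swap_mul_self, mul_one]
  have hssup : (σ * swap (σ⁻¹ (σ.support.max' h1)) (σ.support.max' h1)).support
      = {a, i} := by
    rw [hs, support_swap hai.ne]
  have hmaxi : (σ * swap (σ⁻¹ (σ.support.max' h1)) (σ.support.max' h1)).support.max' h2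
      = i := by
    refine le_antisymm (Finset.max'_le _ _ _ fun y hy => ?_)
      (Finset.le_max' _ _ (by rw [hssup]; simp))
    rw [hssup] at hy
    simp only [Finset.mem_insert, Finset.mem_singleton] at hy
    rcases hy with rfl | rfl
    · exact hai.le
    · exact le_refl _
  rw [dec, hmaxi, hs, swap_apply_right, hmaxj, hinvj]

end JMAux

open Finset Equiv Equiv.Perm JMAux in
theorem stmt_18 (n : ℕ) :
    (∑ p ∈ Finset.univ.filter (fun p : Fin n × Fin n => p.1 < p.2),
        JM n p.1 * JM n p.2) =
      ∑ σ ∈ Finset.univ.filter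
          (fun σ : Equiv.Perm (Fin n) => σ.cycleType.sum - σ.cycleType.card = 2),
        MonoidAlgebra.single σ (1 : ℂ) := by
  have step1 : (∑ p ∈ Finset.univ.filter (fun p : Fin n × Fin n => p.1 < p.2),
        JM n p.1 * JM n p.2) =
      ∑ x ∈ (Finset.univ.filter (fun p : Fin n × Fin n => p.1 < p.2)).sigma
          (fun p => Finset.univ.filter (fun a : Fin n => a < p.1) ×ˢ
            Finset.univ.filter (fun c : Fin n => c < p.2)),
        MonoidAlgebra.single (swap x.2.1 x.1.1 * swap x.2.2 x.1.2) (1 : ℂ) := by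
    rw [Finset.sum_sigma]
    refine Finset.sum_congr rfl fun p _ => ?_
    rw [JM, JM, Finset.sum_mul_sum, ← Finset.sum_product']
    exact Finset.sum_congr rfl fun w _ => by
      rw [MonoidAlgebra.single_mul_single, one_mul]
  have step2 : (∑ x ∈ (Finset.univ.filter (fun p : Fin n × Fin n => p.1 < p.2)).sigma
          (fun p => Finset.univ.filter (fun a : Fin n => a < p.1) ×ˢ
            Finset.univ.filter (fun c : Fin n => c < p.2)),
        MonoidAlgebra.single (swap x.2.1 x.1.1 * swap x.2.2 x.1.2) (1 : ℂ)) =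
      ∑ q ∈ Finset.univ.filter
          (fun q : (Fin n × Fin n) × (Fin n × Fin n) =>
            q.1.1 < q.1.2 ∧ q.2.1 < q.2.2 ∧ q.1.2 < q.2.2),
        MonoidAlgebra.single (swap q.1.1 q.1.2 * swap q.2.1 q.2.2) (1 : ℂ) := by
    refine Finset.sum_bij' (fun x _ => ((x.2.1, x.1.1), (x.2.2, x.1.2)))
      (fun q _ => ⟨(q.1.2, q.2.2), (q.1.1, q.2.1)⟩) ?_ ?_ ?_ ?_ ?_
    · intro x hx
      simp only [Finset.mem_sigma, Finset.mem_filter, Finset.mem_product,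
        Finset.mem_univ, true_and] at hx ⊢
      exact ⟨hx.2.1, hx.2.2, hx.1⟩
    · intro q hq
      simp only [Finset.mem_sigma, Finset.mem_filter, Finset.mem_product,
        Finset.mem_univ, true_and] at hq ⊢
      exact ⟨hq.2.2, hq.1, hq.2.1⟩
    · intro x _; rfl
    · intro q _; rfl
    · intro x _; rfl
  rw [step1, step2]
  refine Finset.sum_bij'
    (fun q _ => swap q.1.1 q.1.2 * swap q.2.1 q.2.2)
    (fun σ hσ => dec σ
      (support_nonempty_of_cond σ (by simpa using (Finset.mem_filter.mp hσ).2))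
      (s_support_nonempty σ (by simpa using (Finset.mem_filter.mp hσ).2) _))
    ?_ ?_ ?_ ?_ ?_
  · intro q hq
    simp only [Finset.mem_filter, Finset.mem_univ, true_and] at hq ⊢
    exact cond_of_swaps hq.1 hq.2.1 hq.2.2
  · intro σ hσ
    have hc := (Finset.mem_filter.mp hσ).2
    obtain ⟨h1', h2', h3', _⟩ := dec_spec σ hc _ _
    simp only [Finset.mem_filter, Finset.mem_univ, true_and]
    exact ⟨h1', h2', h3'⟩
  · intro q hq
    simp only [Finset.mem_filter, Finset.mem_univ, true_and] at hq
    exact dec_of_swaps hq.1 hq.2.1 hq.2.2 _ _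
  · intro σ hσ
    have hc := (Finset.mem_filter.mp hσ).2
    exact (dec_spec σ hc _ _).2.2.2
  · intro q _; rfl
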